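/- Every constraint set ς has a least solution ⟦ς⟧: there exists a constraint mapping ⟦ς⟧ : (BlameId × {subject, context}) → 𝔹₄ such that ⟦ς⟧ ⊨ ς and ⟦ς⟧ ⊑ μ (pointwise) for every constraint mapping μ with μ ⊨ ς; moreover ⟦ς⟧ is the least fixpoint of the monotone mapping Fς induced by ς, obtained by the Knaster–Tarski theorem. -/

import Mathlib

/-! Belnap's four-valued lattice 𝔹₄ as pairs of Booleans (can-be-true, can-be-false):
    ⊥ = (false,false), 𝖿 = (false,true), 𝗍 = (true,false), ⊤ = (true,true),
    with the approximation ordering ⊑ being the componentwise (subset) Boolean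
    ordering, i.e. the default `Prod` order. -/
abbrev B4 := Bool × Bool

/-- Belnap negation: ¬(a₁,a₂) = (a₂,a₁). -/
def B4.neg (a : B4) : B4 := (a.2, a.1)
/-- Belnap conjunction: (a₁,a₂) ∧ (b₁,b₂) = (a₁ ∧ b₁, a₂ ∨ b₂). -/
def B4.and (a b : B4) : B4 := (a.1 && b.1, a.2 || b.2)
/-- Belnap disjunction: (a₁,a₂) ∨ (b₁,b₂) = (a₁ ∨ b₁, a₂ ∧ b₂). -/
def B4.or (a b : B4) : B4 := (a.1 || b.1, a.2 && b.2)
/-- Belnap implication a ⇒ b := ¬a ∨ b. -/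
def B4.imp (a b : B4) : B4 := B4.or (B4.neg a) b
/-- The truth value 𝗍. -/
def B4.t : B4 := (true, false)
/-- Translation ⌈·⌉ of a classical outcome into 𝔹₄ (⌈true⌉ = 𝗍, ⌈false⌉ = 𝖿). -/
def B4.ofBool (b : Bool) : B4 := (b, !b)

/-- Blame identifiers ♭: source-level blame labels ℓ or internal blame variables ι. -/
inductive BlameId : Type
  | lbl (n : ℕ)   -- source-level blame label ℓ
  | var (n : ℕ)   -- internal blame variable ι
deriving DecidableEq

/-- The two record fields of a blame identifier. -/
inductive BField : Type
  | subject
  | context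
deriving DecidableEq

/-- Constraint mappings μ : (BlameId × {subject, context}) → 𝔹₄. -/
abbrev CMap := BlameId × BField → B4

/-- μ(ι.subject) for an internal variable ι. -/
def subj (μ : CMap) (i : ℕ) : B4 := μ (BlameId.var i, BField.subject)
/-- μ(ι.context) for an internal variable ι. -/
def ctx (μ : CMap) (i : ℕ) : B4 := μ (BlameId.var i, BField.context)

/-- Constraints κ (Figure 2): ♭ ◁ v, ♭ ◁ ι₁ → ι₂, ♭ ◁ set(ι), ♭ ◁ ι₁ ∩ ι₂,
    ♭ ◁ ι₁ ∪ ι₂, ♭ ◁ ι₁ ∧ ι₂, ♭ ◁ ι₁ ∨ ι₂, ♭ ◁ ¬ι. -/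
inductive Constraint : Type
  | flat  (b : BlameId) (v : Bool)       -- ♭ ◁ v (outcome of a base contract)
  | fc    (b : BlameId) (i1 i2 : ℕ)      -- ♭ ◁ ι₁ → ι₂
  | set   (b : BlameId) (i : ℕ)          -- ♭ ◁ set(ι)
  | inter (b : BlameId) (i1 i2 : ℕ)      -- ♭ ◁ ι₁ ∩ ι₂
  | union (b : BlameId) (i1 i2 : ℕ)      -- ♭ ◁ ι₁ ∪ ι₂
  | conj  (b : BlameId) (i1 i2 : ℕ)      -- ♭ ◁ ι₁ ∧ ι₂
  | disj  (b : BlameId) (i1 i2 : ℕ)      -- ♭ ◁ ι₁ ∨ ι₂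
  | neg   (b : BlameId) (i : ℕ)          -- ♭ ◁ ¬ι
deriving DecidableEq

/-- The head ♭ of a constraint. -/
def Constraint.head : Constraint → BlameId
  | flat b _ => b | fc b _ _ => b | set b _ => b | inter b _ _ => b
  | union b _ _ => b | conj b _ _ => b | disj b _ _ => b | neg b _ => b

/-- Right-hand side (Figure 3) of the ⊑-inequality for μ(♭.subject). -/
def Constraint.subjRHS : Constraint → CMap → B4
  | flat _ v, _ => B4.ofBool v
  | fc _ i1 i2, μ => B4.and (ctx μ i1) (B4.imp (subj μ i1) (subj μ i2))
  | set _ _, _ => B4.t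
  | inter _ i1 i2, μ => B4.and (subj μ i1) (subj μ i2)
  | union _ i1 i2, μ => B4.or (subj μ i1) (subj μ i2)
  | conj _ i1 i2, μ =>
      B4.imp (B4.and (ctx μ i1) (ctx μ i2)) (B4.and (subj μ i1) (subj μ i2))
  | disj _ i1 i2, μ =>
      B4.imp (B4.or (ctx μ i1) (ctx μ i2))
        (B4.or (B4.and (ctx μ i1) (subj μ i1)) (B4.and (ctx μ i2) (subj μ i2)))
  | neg _ i, μ => B4.imp (subj μ i) (B4.neg (ctx μ i))

/-- Right-hand side (Figure 3) of the ⊑-inequality for μ(♭.context). -/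
def Constraint.ctxRHS : Constraint → CMap → B4
  | flat _ _, _ => B4.t
  | fc _ i1 i2, μ => B4.and (subj μ i1) (ctx μ i2)
  | set _ i, μ => subj μ i
  | inter _ i1 i2, μ => B4.or (ctx μ i1) (ctx μ i2)
  | union _ i1 i2, μ => B4.and (ctx μ i1) (ctx μ i2)
  | conj _ i1 i2, μ => B4.and (ctx μ i1) (ctx μ i2)
  | disj _ i1 i2, μ => B4.or (ctx μ i1) (ctx μ i2)
  | neg _ _, _ => B4.t

/-- The right-hand side of the Figure 3 inequality for field `p` of the head. -/
def Constraint.rhs (κ : Constraint) (p : BField) (μ : CMap) : B4 :=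
  match p with
  | BField.subject => κ.subjRHS μ
  | BField.context => κ.ctxRHS μ

/-- μ satisfies a single constraint κ: the two ⊑-inequalities of Figure 3. -/
def SatC (μ : CMap) (κ : Constraint) : Prop :=
  κ.subjRHS μ ≤ μ (κ.head, BField.subject) ∧ κ.ctxRHS μ ≤ μ (κ.head, BField.context)

/-- μ ⊨ ς: μ is a solution of the constraint set ς. -/
def Sat (μ : CMap) (ς : Finset Constraint) : Prop := ∀ κ ∈ ς, SatC μ κ

/-- Fς : for fixed ς, maps μ to the pointwise ⊑-join, over all constraints in ς
    whose head is ♭, of the corresponding Figure-3 Boolean term evaluated in μ;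
    it is a monotone map with μ ⊨ ς iff Fς(μ) ⊑ μ. -/
noncomputable def Fmap (ς : Finset Constraint) (μ : CMap) : CMap :=
  fun bp => (ς.filter (fun κ => κ.head = bp.1)).sup (fun κ => κ.rhs bp.2 μ)

section aux

lemma bool_and_mono {a a' b b' : Bool} (ha : a ≤ a') (hb : b ≤ b') :
    (a && b) ≤ (a' && b') := by
  cases a <;> cases a' <;> cases b <;> cases b' <;> simp_all

lemma bool_or_mono {a a' b b' : Bool} (ha : a ≤ a') (hb : b ≤ b') :
    (a || b) ≤ (a' || b') := by
  cases a <;> cases a' <;> cases b <;> cases b' <;> simp_all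

lemma B4.neg_mono {a a' : B4} (h : a ≤ a') : B4.neg a ≤ B4.neg a' :=
  ⟨h.2, h.1⟩

lemma B4.and_mono {a a' b b' : B4} (ha : a ≤ a') (hb : b ≤ b') :
    B4.and a b ≤ B4.and a' b' :=
  ⟨bool_and_mono ha.1 hb.1, bool_or_mono ha.2 hb.2⟩

lemma B4.or_mono {a a' b b' : B4} (ha : a ≤ a') (hb : b ≤ b') :
    B4.or a b ≤ B4.or a' b' :=
  ⟨bool_or_mono ha.1 hb.1, bool_and_mono ha.2 hb.2⟩

lemma B4.imp_mono {a a' b b' : B4} (ha : a ≤ a') (hb : b ≤ b') :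
    B4.imp a b ≤ B4.imp a' b' :=
  B4.or_mono (B4.neg_mono ha) hb

lemma rhs_mono (κ : Constraint) (p : BField) :
    Monotone (fun μ => κ.rhs p μ) := by
  intro μ μ' h
  have hs : ∀ i, subj μ i ≤ subj μ' i := fun i => h _
  have hc : ∀ i, ctx μ i ≤ ctx μ' i := fun i => h _
  cases p <;> cases κ <;>
    simp only [Constraint.rhs, Constraint.subjRHS, Constraint.ctxRHS] <;>
    solve_by_elim (maxDepth := 12) [B4.and_mono, B4.or_mono, B4.imp_mono, B4.neg_mono, le_refl]

lemma Fmap_mono (ς : Finset Constraint) : Monotone (Fmap ς) := by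
  intro μ μ' h bp
  exact Finset.sup_mono_fun (fun κ _ => rhs_mono κ bp.2 h)

lemma sat_iff (ς : Finset Constraint) (μ : CMap) :
    Sat μ ς ↔ Fmap ς μ ≤ μ := by
  constructor
  · intro h bp
    apply Finset.sup_le
    intro κ hκ
    rw [Finset.mem_filter] at hκ
    obtain ⟨hκ, hd⟩ := hκ
    have := h κ hκ
    obtain ⟨b, p⟩ := bp
    subst hd
    cases p
    · exact this.1
    · exact this.2
  · intro h κ hκ
    constructor
    · refine le_trans ?_ (h (κ.head, BField.subject))
      show κ.rhs BField.subject μ ≤ Fmap ς μ (κ.head, BField.subject)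
      exact Finset.le_sup (s := ς.filter (fun κ' => κ'.head = κ.head))
        (f := fun κ' => κ'.rhs BField.subject μ)
        (Finset.mem_filter.mpr ⟨hκ, rfl⟩)
    · refine le_trans ?_ (h (κ.head, BField.context))
      show κ.rhs BField.context μ ≤ Fmap ς μ (κ.head, BField.context)
      exact Finset.le_sup (s := ς.filter (fun κ' => κ'.head = κ.head))
        (f := fun κ' => κ'.rhs BField.context μ)
        (Finset.mem_filter.mpr ⟨hκ, rfl⟩)

end aux

/-- Every constraint set ς has a least solution ⟦ς⟧: it satisfies ς, it is
    pointwise below every solution of ς, and it is the least fixpoint of the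
    monotone mapping Fς (as given by the Knaster–Tarski theorem). -/
theorem least_solution_exists (ς : Finset Constraint) :
    ∃ sem : CMap,
      Sat sem ς ∧
      (∀ μ : CMap, Sat μ ς → sem ≤ μ) ∧
      Fmap ς sem = sem ∧
      (∀ μ : CMap, Fmap ς μ = μ → sem ≤ μ) := by
  let f : CMap →o CMap := ⟨Fmap ς, Fmap_mono ς⟩
  refine ⟨OrderHom.lfp f, ?_, ?_, ?_, ?_⟩
  · exact (sat_iff ς _).mpr (OrderHom.map_lfp f).le
  · intro μ hμ
    exact OrderHom.lfp_le f ((sat_iff ς μ).mp hμ)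
  · exact OrderHom.map_lfp f
  · intro μ hμ
    exact OrderHom.lfp_le f hμ.le
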